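/- For any positive irrational θ, the signature sequence S_θ is doubly fractal: S_θ(1) = 1 and both the upper-trimmed and lower-trimmed subsequences of S_θ equal S_θ. -/
import Mathlib

lemma smono_range_eq {v w : ℕ → ℝ} (hv : StrictMono v) (hw : StrictMono w)
    (h : Set.range v = Set.range w) : v = w := by
  funext k
  induction k using Nat.strong_induction_on with
  | _ k ih =>
    obtain ⟨m, hm⟩ : v k ∈ Set.range w := h ▸ Set.mem_range_self k
    obtain ⟨n, hn⟩ : w k ∈ Set.range v := h.symm ▸ Set.mem_range_self k
    have h1 : v k ≤ w k := by
      rcases lt_or_ge n k with hnk | hnk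
      · exfalso; have := hw hnk; rw [← ih n hnk, hn] at this; exact lt_irrefl _ this
      · rw [← hn]; exact hv.monotone hnk
    have h2 : w k ≤ v k := by
      rcases lt_or_ge m k with hmk | hmk
      · exfalso; have := hv hmk; rw [ih m hmk, hm] at this; exact lt_irrefl _ this
      · rw [← hm]; exact hw.monotone hmk
    linarith

lemma fval_inj {θ : ℝ} (hirr : Irrational θ) :
    Function.Injective (fun x : ℕ × ℕ => (x.1 : ℝ) + x.2 * θ) := by
  rintro ⟨a, b⟩ ⟨c, d⟩ h
  simp only at h
  have hbd : b = d := by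
    by_contra hne
    have hne' : ((b : ℝ) - d) ≠ 0 := by
      intro h0
      exact hne (by exact_mod_cast sub_eq_zero.mp h0)
    have hθ : θ = ((c : ℝ) - a) / ((b : ℝ) - d) := by
      field_simp
      linarith
    apply hirr
    refine ⟨((c : ℚ) - a) / ((b : ℚ) - d), ?_⟩
    rw [hθ]; push_cast; ring
  subst hbd
  have : (a : ℝ) = c := by linarith
  exact Prod.ext (by exact_mod_cast this) rfl

lemma enum_unique {θ : ℝ} (hirr : Irrational θ) (p q : ℕ → ℕ × ℕ)
    (hp1 : ∀ k, 0 < (p k).1 ∧ 0 < (p k).2)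
    (hp2 : ∀ i j, 0 < i → 0 < j → ∃ k, p k = (i, j))
    (hp3 : StrictMono (fun k => ((p k).1 : ℝ) + (p k).2 * θ))
    (hq1 : ∀ k, 0 < (q k).1 ∧ 0 < (q k).2)
    (hq2 : ∀ i j, 0 < i → 0 < j → ∃ k, q k = (i, j))
    (hq3 : StrictMono (fun k => ((q k).1 : ℝ) + (q k).2 * θ)) : p = q := by
  set f : ℕ × ℕ → ℝ := fun x => (x.1 : ℝ) + x.2 * θ with hf
  have hrange : Set.range (fun k => f (p k)) = Set.range (fun k => f (q k)) := by
    have h1 : ∀ (r : ℕ → ℕ × ℕ), (∀ k, 0 < (r k).1 ∧ 0 < (r k).2) →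
        (∀ i j, 0 < i → 0 < j → ∃ k, r k = (i, j)) →
        Set.range (fun k => f (r k)) = f '' {x | 0 < x.1 ∧ 0 < x.2} := by
      intro r hr1 hr2
      ext y
      constructor
      · rintro ⟨k, rfl⟩; exact ⟨r k, hr1 k, rfl⟩
      · rintro ⟨⟨i, j⟩, ⟨hi, hj⟩, rfl⟩
        obtain ⟨k, hk⟩ := hr2 i j hi hj
        exact ⟨k, show f (r k) = f (i, j) by rw [hk]⟩
    rw [h1 p hp1 hp2, h1 q hq1 hq2]
  have := smono_range_eq hp3 hq3 hrange
  funext k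
  exact fval_inj hirr (congrFun this k)

/-- `upperTrim S` removes from `S` every first occurrence of every value. -/
noncomputable def upperTrim (S : ℕ → ℕ) : ℕ → ℕ :=
  fun k => S (Nat.nth (fun i => ¬ ∀ j < i, S j ≠ S i) k)

/-- `lowerTrim S` subtracts 1 from each term and deletes the resulting zeros. -/
noncomputable def lowerTrim (S : ℕ → ℕ) : ℕ → ℕ :=
  fun k => S (Nat.nth (fun i => 2 ≤ S i) k) - 1

/-- A sequence of positive integers, in which every positive integer occurs,
is doubly fractal if its first term is 1 and both trimmings return `S`. -/
def DoublyFractal (S : ℕ → ℕ) : Prop :=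
  (∀ i, 0 < S i) ∧ (∀ m, 0 < m → ∃ i, S i = m) ∧
  S 0 = 1 ∧ upperTrim S = S ∧ lowerTrim S = S

/-- `S` is the signature sequence of `θ`: there is an enumeration `p` of all pairs of
positive integers, sorted increasingly by the value `i + j*θ`, with `S k = (p k).1`. -/
def IsSignature (θ : ℝ) (S : ℕ → ℕ) : Prop :=
  ∃ p : ℕ → ℕ × ℕ,
    (∀ k, 0 < (p k).1 ∧ 0 < (p k).2) ∧
    (∀ i j, 0 < i → 0 < j → ∃ k, p k = (i, j)) ∧
    StrictMono (fun k => ((p k).1 : ℝ) + (p k).2 * θ) ∧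
    ∀ k, S k = (p k).1

/-- The signature sequence of a positive irrational is doubly fractal. -/
theorem stmt14 (θ : ℝ) (hpos : 0 < θ) (hirr : Irrational θ)
    (S : ℕ → ℕ) (hS : IsSignature θ S) : DoublyFractal S := by
  classical
  obtain ⟨p, hp1, hp2, hp3, hp4⟩ := hS
  set v : ℕ → ℝ := fun k => ((p k).1 : ℝ) + (p k).2 * θ with hv
  have pinj : Function.Injective p := by
    intro a b h
    exact hp3.injective (by simp only [hv, h])
  -- S 0 = 1
  have hS0 : S 0 = 1 := by
    obtain ⟨k, hk⟩ := hp2 1 1 one_pos one_pos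
    have hle : v 0 ≤ v k := hp3.monotone (Nat.zero_le k)
    have hvk : v k = 1 + θ := by simp [hv, hk]
    have h2 : (1 : ℝ) ≤ (p 0).2 := by exact_mod_cast (hp1 0).2
    have hθ2 : θ ≤ (p 0).2 * θ := le_mul_of_one_le_left hpos.le h2
    have h1 : ((p 0).1 : ℝ) ≤ 1 := by
      have h3 : ((p 0).1 : ℝ) + (p 0).2 * θ ≤ 1 + θ := by
        rw [← hvk]; exact hle
      linarith
    have h1' : (p 0).1 ≤ 1 := by exact_mod_cast h1
    have h0 := (hp1 0).1
    rw [hp4]; omega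
  -- == upperTrim ==
  have hupper : upperTrim S = S := by
    have hAeq : (fun i => ¬ ∀ j < i, S j ≠ S i) = (fun i => 2 ≤ (p i).2) := by
      funext i
      apply propext
      constructor
      · intro hA
        push_neg at hA
        obtain ⟨j, hji, hSj⟩ := hA
        have hvlt : v j < v i := hp3 hji
        have heq1 : (p j).1 = (p i).1 := by rw [← hp4, ← hp4, hSj]
        have : ((p j).2 : ℝ) * θ < (p i).2 * θ := by
          simp only [hv] at hvlt
          rw [heq1] at hvlt; linarith
        have h2 : (p j).2 < (p i).2 := by
          have := lt_of_mul_lt_mul_right (by linarith : ((p j).2 : ℝ) * θ < (p i).2 * θ) hpos.le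
          exact_mod_cast this
        have := (hp1 j).2
        omega
      · intro h2
        obtain ⟨k, hk⟩ := hp2 (p i).1 1 (hp1 i).1 one_pos
        have hvk : v k = (p i).1 + θ := by simp [hv, hk]
        have hvlt : v k < v i := by
          have h2' : (2 : ℝ) ≤ (p i).2 := by exact_mod_cast h2
          have : θ < (p i).2 * θ := by nlinarith
          simp only [hv] at *
          rw [hvk]; linarith
        have hki : k < i := by
          by_contra hge
          push_neg at hge
          exact absurd (hp3.monotone hge) (not_le.mpr hvlt)
        intro hall
        exact hall k hki (by rw [hp4, hp4, hk])
    have hAinf : {i | 2 ≤ (p i).2}.Infinite := by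
      have hg : ∀ n : ℕ, ∃ k, p k = (1, n + 2) := fun n => hp2 1 (n + 2) one_pos (by omega)
      set g : ℕ → ℕ := fun n => (hg n).choose with hgdef
      apply Set.infinite_of_injective_forall_mem (f := g)
      · intro a b hab
        have ha := (hg a).choose_spec
        have hb := (hg b).choose_spec
        rw [hgdef] at hab
        simp only at hab
        rw [hab, hb] at ha
        have hba : b = a := by simpa using ha
        omega
      · intro n
        have := (hg n).choose_spec
        simp only [Set.mem_setOf_eq, hgdef, this]
        omega
    set A : ℕ → Prop := fun i => 2 ≤ (p i).2 with hA
    have hAinf' : (setOf A).Infinite := hAinf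
    set q : ℕ → ℕ × ℕ := fun k => ((p (Nat.nth A k)).1, (p (Nat.nth A k)).2 - 1) with hq
    have hmem : ∀ k, 2 ≤ (p (Nat.nth A k)).2 := fun k => Nat.nth_mem_of_infinite hAinf' k
    have hq1 : ∀ k, 0 < (q k).1 ∧ 0 < (q k).2 := by
      intro k
      refine ⟨(hp1 _).1, ?_⟩
      have := hmem k
      simp only [hq]
      omega
    have hq2 : ∀ i j, 0 < i → 0 < j → ∃ k, q k = (i, j) := by
      intro i j hi hj
      obtain ⟨k, hk⟩ := hp2 i (j + 1) hi (by omega)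
      have hkA : A k := by simp only [hA, hk]; omega
      refine ⟨Nat.count A k, ?_⟩
      simp only [hq, Nat.nth_count hkA, hk]
      simp
    have hq3 : StrictMono (fun k => ((q k).1 : ℝ) + (q k).2 * θ) := by
      have hcast : ∀ k, ((q k).1 : ℝ) + (q k).2 * θ = v (Nat.nth A k) - θ := by
        intro k
        have h2 := hmem k
        simp only [hq, hv]
        rw [Nat.cast_sub (by omega : 1 ≤ (p (Nat.nth A k)).2)]
        push_cast; ring
      intro a b hab
      simp only [hcast]
      have := hp3 (Nat.nth_strictMono hAinf' hab)
      simp only [hv] at this ⊢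
      linarith
    have hqp : q = p := enum_unique hirr q p hq1 hq2 hq3 hp1 hp2 hp3
    funext k
    show S (Nat.nth (fun i => ¬ ∀ j < i, S j ≠ S i) k) = S k
    rw [hAeq]
    rw [hp4, hp4 k]
    have h' : (q k).1 = (p k).1 := congrArg Prod.fst (congrFun hqp k)
    simpa [hq] using h'
  -- == lowerTrim ==
  have hlower : lowerTrim S = S := by
    have hBeq : (fun i => 2 ≤ S i) = (fun i => 2 ≤ (p i).1) := by
      funext i; rw [hp4]
    have hBinf : {i | 2 ≤ (p i).1}.Infinite := by
      have hg : ∀ n : ℕ, ∃ k, p k = (2, n + 1) := fun n => hp2 2 (n + 1) (by omega) (by omega)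
      set g : ℕ → ℕ := fun n => (hg n).choose with hgdef
      apply Set.infinite_of_injective_forall_mem (f := g)
      · intro a b hab
        have ha := (hg a).choose_spec
        have hb := (hg b).choose_spec
        rw [hgdef] at hab
        simp only at hab
        rw [hab, hb] at ha
        have hba : b = a := by simpa using ha
        omega
      · intro n
        have := (hg n).choose_spec
        simp only [Set.mem_setOf_eq, hgdef, this]
        omega
    set B : ℕ → Prop := fun i => 2 ≤ (p i).1 with hB
    have hBinf' : (setOf B).Infinite := hBinf
    set r : ℕ → ℕ × ℕ := fun k => ((p (Nat.nth B k)).1 - 1, (p (Nat.nth B k)).2) with hr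
    have hmem : ∀ k, 2 ≤ (p (Nat.nth B k)).1 := fun k => Nat.nth_mem_of_infinite hBinf' k
    have hr1 : ∀ k, 0 < (r k).1 ∧ 0 < (r k).2 := by
      intro k
      refine ⟨?_, (hp1 _).2⟩
      have := hmem k
      simp only [hr]
      omega
    have hr2 : ∀ i j, 0 < i → 0 < j → ∃ k, r k = (i, j) := by
      intro i j hi hj
      obtain ⟨k, hk⟩ := hp2 (i + 1) j (by omega) hj
      have hkB : B k := by simp only [hB, hk]; omega
      refine ⟨Nat.count B k, ?_⟩
      simp only [hr, Nat.nth_count hkB, hk]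
      simp
    have hr3 : StrictMono (fun k => ((r k).1 : ℝ) + (r k).2 * θ) := by
      have hcast : ∀ k, ((r k).1 : ℝ) + (r k).2 * θ = v (Nat.nth B k) - 1 := by
        intro k
        have h2 := hmem k
        simp only [hr, hv]
        rw [Nat.cast_sub (by omega : 1 ≤ (p (Nat.nth B k)).1)]
        push_cast; ring
      intro a b hab
      simp only [hcast]
      have := hp3 (Nat.nth_strictMono hBinf' hab)
      simp only [hv] at this ⊢
      linarith
    have hrp : r = p := enum_unique hirr r p hr1 hr2 hr3 hp1 hp2 hp3
    funext k
    show S (Nat.nth (fun i => 2 ≤ S i) k) - 1 = S k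
    rw [hBeq]
    rw [hp4, hp4 k]
    have h' : (r k).1 = (p k).1 := congrArg Prod.fst (congrFun hrp k)
    simp only [hr] at h'
    omega
  refine ⟨fun i => by rw [hp4]; exact (hp1 i).1, fun m hm => ?_, hS0, hupper, hlower⟩
  obtain ⟨k, hk⟩ := hp2 m 1 hm one_pos
  exact ⟨k, by rw [hp4, hk]⟩
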